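/- (Corollary 3.3) Let n ≥ 2 and fix arbitrary reals c_{ij} for 1 ≤ i < j ≤ n (the noise-free measured ranges, including any fault biases). For a noise vector w = (w_{ij})_{1 ≤ i < j ≤ n} ∈ ℝ^{n(n−1)/2}, define the noisy EDM D̃(w) ∈ ℝ^{n×n} by D̃(w)_{ij} = D̃(w)_{ji} = (c_{ij} + w_{ij})² for i < j and D̃(w)_{ii} = 0, and let G̃(w) = −(1/2) J D̃(w) J with J = I_n − (1/n) 𝟙 𝟙ᵀ. Then for Lebesgue-almost every w ∈ ℝ^{n(n−1)/2}, rank(G̃(w)) = n − 1. -/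

import Mathlib

open Matrix MeasureTheory
open MvPolynomial

theorem mvpoly_fin_null : ∀ (m : ℕ) (p : MvPolynomial (Fin m) ℝ), p ≠ 0 →
    (volume : Measure (Fin m → ℝ)) {x | eval x p = 0} = 0 := by
  intro m
  induction m with
  | zero =>
    intro p hp
    obtain ⟨a, rfl⟩ := C_surjective (Fin 0) p
    have ha : a ≠ 0 := fun h => hp (by simp [h])
    have h : {x : Fin 0 → ℝ | eval x (C a) = 0} = ∅ := by
      ext x; simp [ha]
    rw [h, measure_empty]
  | succ m ih =>
    intro p hp
    set q := finSuccEquiv ℝ m p with hqdef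
    have hq0 : q ≠ 0 := by
      intro h
      exact hp ((EmbeddingLike.map_eq_zero_iff (f := finSuccEquiv ℝ m)).mp h)
    have hk : ∃ k, q.coeff k ≠ 0 := by
      by_contra h
      push_neg at h
      exact hq0 (Polynomial.ext fun k => by simp [h k])
    obtain ⟨k, hk⟩ := hk
    set e := MeasurableEquiv.piFinSuccAbove (fun _ : Fin (m+1) => ℝ) 0 with hedef
    have mp : MeasurePreserving e volume volume :=
      volume_preserving_piFinSuccAbove (fun _ : Fin (m+1) => ℝ) 0
    set A : Set ((Fin m → ℝ) × ℝ) :=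
      {sy | Polynomial.eval sy.2 (Polynomial.map (eval sy.1) q) = 0} with hAdef
    have hAeval : ∀ sy : (Fin m → ℝ) × ℝ,
        (sy ∈ A ↔ eval (Fin.cons sy.2 sy.1) p = 0) := fun sy => by
      rw [hAdef]
      simp only [Set.mem_setOf_eq]
      rw [eval_eq_eval_mv_eval']
    have hAmeas : MeasurableSet A := by
      have hcont : Continuous fun sy : (Fin m → ℝ) × ℝ =>
          eval (Fin.cons sy.2 sy.1) p := by
        have hc : Continuous fun sy : (Fin m → ℝ) × ℝ =>
            (Fin.cons sy.2 sy.1 : Fin (m+1) → ℝ) := by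
          apply continuous_pi
          intro i
          refine Fin.cases ?_ ?_ i
          · simpa using (continuous_snd : Continuous fun sy : (Fin m → ℝ) × ℝ => sy.2)
          · intro j
            simp only [Fin.cons_succ]
            exact (continuous_apply j).comp continuous_fst
        exact (MvPolynomial.continuous_eval (p := p)).comp hc
      have : A = (fun sy : (Fin m → ℝ) × ℝ => eval (Fin.cons sy.2 sy.1) p) ⁻¹' {0} := by
        ext sy; simpa using hAeval sy
      rw [this]
      exact hcont.measurable (measurableSet_singleton 0)
    -- A is null
    have hA0 : (volume : Measure ((Fin m → ℝ) × ℝ)) A = 0 := by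
      rw [MeasureTheory.Measure.volume_eq_prod, MeasureTheory.Measure.measure_prod_null hAmeas]
      have hbad := ih (q.coeff k) hk
      rw [← compl_compl {s : Fin m → ℝ | eval s (q.coeff k) = 0}] at hbad
      have hgood : ∀ᵐ s ∂(volume : Measure (Fin m → ℝ)), eval s (q.coeff k) ≠ 0 := by
        rw [ae_iff]
        simpa using ih (q.coeff k) hk
      filter_upwards [hgood] with s hs
      have hmapne : Polynomial.map (eval s) q ≠ 0 := by
        intro h
        apply hs
        rw [← Polynomial.coeff_map (eval s) k, h, Polynomial.coeff_zero]
      have : Prod.mk s ⁻¹' A = {y : ℝ | (Polynomial.map (eval s) q).IsRoot y} := rfl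
      rw [this]
      exact Set.Finite.measure_zero (Polynomial.finite_setOf_isRoot hmapne) volume
    -- transfer back
    have hpre : {x : Fin (m+1) → ℝ | eval x p = 0} = e ⁻¹' (Prod.swap ⁻¹' A) := by
      ext x
      simp only [Set.mem_preimage, Set.mem_setOf_eq]
      rw [hAeval]
      have h1 : (Prod.swap (e x)).2 = x 0 := rfl
      have h2 : (Prod.swap (e x)).1 = fun j => x ((0 : Fin (m+1)).succAbove j) := rfl
      rw [h1, h2]
      have : Fin.cons (x 0) (fun j : Fin m => x ((0 : Fin (m+1)).succAbove j)) = x := by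
        ext i
        refine Fin.cases ?_ ?_ i
        · simp
        · intro j; simp [Fin.succAbove_zero]
      rw [this]
    rw [hpre, mp.measure_preimage]
    · rw [MeasureTheory.Measure.volume_eq_prod]
      rw [show ((volume : Measure ℝ).prod (volume : Measure (Fin m → ℝ))) (Prod.swap ⁻¹' A)
            = ((volume : Measure (Fin m → ℝ)).prod volume) A from
          (MeasureTheory.Measure.measurePreserving_swap).measure_preimage hAmeas.nullMeasurableSet]
      rw [← MeasureTheory.Measure.volume_eq_prod]
      exact hA0
    · exact (hAmeas.preimage measurable_swap).nullMeasurableSet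

theorem mvpoly_null (ι : Type*) [Fintype ι] (p : MvPolynomial ι ℝ) (hp : p ≠ 0) :
    (volume : Measure (ι → ℝ)) {x | eval x p = 0} = 0 := by
  classical
  let e : ι ≃ Fin (Fintype.card ι) := Fintype.equivFin ι
  have mp : MeasurePreserving (MeasurableEquiv.piCongrLeft (fun _ : Fin (Fintype.card ι) => ℝ) e)
      volume volume :=
    volume_measurePreserving_piCongrLeft (fun _ => ℝ) e
  have hq : rename e p ≠ 0 := fun h =>
    hp (by simpa using (rename_injective e e.injective) (h.trans (map_zero _).symm))
  have hset : {x : ι → ℝ | eval x p = 0}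
      = (MeasurableEquiv.piCongrLeft (fun _ : Fin (Fintype.card ι) => ℝ) e) ⁻¹'
        {y : Fin (Fintype.card ι) → ℝ | eval y (rename e p) = 0} := by
    ext x
    simp only [Set.mem_preimage, Set.mem_setOf_eq, eval_rename]
    have : ((MeasurableEquiv.piCongrLeft (fun _ : Fin (Fintype.card ι) => ℝ) e) x) ∘ e = x := by
      ext i
      simp [MeasurableEquiv.piCongrLeft, Equiv.piCongrLeft]
    rw [this]
  have hmeas : MeasurableSet {y : Fin (Fintype.card ι) → ℝ | eval y (rename e p) = 0} := by
    have : {y : Fin (Fintype.card ι) → ℝ | eval y (rename e p) = 0}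
        = (fun y => eval y (rename e p)) ⁻¹' {0} := rfl
    rw [this]
    exact (MvPolynomial.continuous_eval (p := rename e p)).measurable (measurableSet_singleton 0)
  rw [hset, mp.measure_preimage hmeas.nullMeasurableSet]
  exact mvpoly_fin_null _ _ hq

open Matrix in
theorem rank_le_pred_of_mulVec_eq_zero {n : ℕ} (A : Matrix (Fin n) (Fin n) ℝ)
    {v : Fin n → ℝ} (hv : v ≠ 0) (h : A.mulVec v = 0) : A.rank ≤ n - 1 := by
  have h1 := LinearMap.finrank_range_add_finrank_ker A.mulVecLin
  have h2 : Module.finrank ℝ (Fin n → ℝ) = n := by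
    simp [Module.finrank_fintype_fun_eq_card]
  have hker : 0 < Module.finrank ℝ (LinearMap.ker A.mulVecLin) := by
    have hmem : v ∈ LinearMap.ker A.mulVecLin := by simpa using h
    have : Nontrivial (LinearMap.ker A.mulVecLin) :=
      nontrivial_of_ne ⟨v, hmem⟩ 0 (by simpa [Subtype.ext_iff] using hv)
    exact Module.finrank_pos
  have h3 : A.rank = Module.finrank ℝ (LinearMap.range A.mulVecLin) := rfl
  omega

open Matrix in
theorem rank_submatrix_le' {k n : ℕ} (A : Matrix (Fin n) (Fin n) ℝ) (f : Fin k → Fin n) :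
    (A.submatrix f f).rank ≤ A.rank := by
  classical
  let E : Matrix (Fin k) (Fin n) ℝ := Matrix.of fun i j => if j = f i then 1 else 0
  have h1 : E * A = A.submatrix f id := by
    ext i j
    simp only [Matrix.mul_apply, Matrix.submatrix_apply, id, E, Matrix.of_apply, ite_mul,
      one_mul, zero_mul]
    rw [Finset.sum_ite_eq' Finset.univ (f i) (fun a => A a j)]
    simp
  have h2 : A.submatrix f id * Eᵀ = A.submatrix f f := by
    ext i j
    simp only [Matrix.mul_apply, Matrix.submatrix_apply, id, E, Matrix.transpose_apply,
      Matrix.of_apply, mul_ite, mul_one, mul_zero]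
    rw [Finset.sum_ite_eq' Finset.univ (f j) (fun b => A (f i) b)]
    simp
  calc (A.submatrix f f).rank = (E * A * Eᵀ).rank := by rw [h1, h2]
    _ ≤ (E * A).rank := Matrix.rank_mul_le_left _ _
    _ ≤ A.rank := Matrix.rank_mul_le_right _ _


/-- The noisy EDM built from noise-free measured ranges `c i j` (for `i < j`)
and a noise vector `w` indexed by the pairs `i < j`:
the `(i,j)` entry is the square of the measured range `c i j + w i j`, and
the diagonal entries are zero. -/
noncomputable def noisyEDM (n : ℕ) (c : Fin n → Fin n → ℝ)
    (w : {p : Fin n × Fin n // p.1 < p.2} → ℝ) :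
    Matrix (Fin n) (Fin n) ℝ := fun i j =>
  if h : i < j then (c i j + w ⟨(i, j), h⟩) ^ 2
  else if h' : j < i then (c j i + w ⟨(j, i), h'⟩) ^ 2
  else 0

/-- Corollary 3.3: for Lebesgue-almost every noise vector `w`, the
geometric-centered noisy EDM `G̃(w) = −(1/2) J D̃(w) J` has rank `n − 1`. -/
theorem gcedm_noisy_rank_ae
    {n : ℕ} (hn : 2 ≤ n) (c : Fin n → Fin n → ℝ)
    (J : Matrix (Fin n) (Fin n) ℝ)
    (hJ : J = 1 - ((n : ℝ)⁻¹) • vecMulVec (1 : Fin n → ℝ) (1 : Fin n → ℝ)) :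
    ∀ᵐ w ∂(volume : Measure ({p : Fin n × Fin n // p.1 < p.2} → ℝ)),
      ((-(1/2) : ℝ) • (J * noisyEDM n c w * J)).rank = n - 1 := by
  classical
  have hn0 : (n : ℝ) ≠ 0 := Nat.cast_ne_zero.mpr (by omega)
  set ι := {p : Fin n × Fin n // p.1 < p.2} with hιdef
  -- the polynomial matrix
  set Ep : Matrix (Fin n) (Fin n) (MvPolynomial ι ℝ) := fun i j =>
    if h : i < j then (MvPolynomial.C (c i j) + MvPolynomial.X ⟨(i,j), h⟩)^2
    else if h' : j < i then (MvPolynomial.C (c j i) + MvPolynomial.X ⟨(j,i), h'⟩)^2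
    else 0 with hEpdef
  set Jp : Matrix (Fin n) (Fin n) (MvPolynomial ι ℝ) := J.map MvPolynomial.C with hJpdef
  set emb : Fin (n-1) → Fin n := Fin.castLE (Nat.sub_le n 1) with hembdef
  set P : MvPolynomial ι ℝ :=
    (((MvPolynomial.C (-(1/2) : ℝ) : MvPolynomial ι ℝ) • (Jp * Ep * Jp)).submatrix emb emb).det with hPdef
  -- evaluation of the polynomial matrix
  have hmap : ∀ w : ι → ℝ, ((MvPolynomial.C (-(1/2) : ℝ) : MvPolynomial ι ℝ) • (Jp * Ep * Jp)).map
      (MvPolynomial.eval w) = (-(1/2) : ℝ) • (J * noisyEDM n c w * J) := by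
    intro w
    have hJp : Jp.map (MvPolynomial.eval w) = J := by
      ext i j; simp [hJpdef, Matrix.map_apply]
    have hEp : Ep.map (MvPolynomial.eval w) = noisyEDM n c w := by
      ext i j
      simp only [Matrix.map_apply]
      simp only [hEpdef, noisyEDM]
      split_ifs <;> simp
    have hmul : (Jp * Ep * Jp).map (MvPolynomial.eval w) = J * noisyEDM n c w * J := by
      rw [Matrix.map_mul (f := (MvPolynomial.eval w : MvPolynomial ι ℝ →+* ℝ)),
        Matrix.map_mul (f := (MvPolynomial.eval w : MvPolynomial ι ℝ →+* ℝ)), hJp, hEp]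
    ext i j
    calc MvPolynomial.eval w (MvPolynomial.C (-(1/2):ℝ) * (Jp * Ep * Jp) i j)
        = (-(1/2):ℝ) * MvPolynomial.eval w ((Jp * Ep * Jp) i j) := by
          rw [_root_.map_mul, MvPolynomial.eval_C]
      _ = (-(1/2):ℝ) * (J * noisyEDM n c w * J) i j := by
          rw [← Matrix.map_apply (f := MvPolynomial.eval w), hmul]
  have hdet : ∀ w : ι → ℝ, MvPolynomial.eval w P =
      ((((-(1/2) : ℝ) • (J * noisyEDM n c w * J)).submatrix emb emb)).det := by
    intro w
    rw [hPdef, RingHom.map_det (MvPolynomial.eval w : MvPolynomial ι ℝ →+* ℝ)]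
    congr 1
    rw [← hmap w]
    exact (Matrix.submatrix_map _ _ _ _).symm
  -- J annihilates the all-ones vector
  have hrow : ∀ i, ∑ k, J i k = 0 := by
    intro i
    rw [hJ]
    simp only [Matrix.sub_apply, Matrix.one_apply, Matrix.smul_apply, Matrix.vecMulVec_apply,
      Pi.one_apply, mul_one, smul_eq_mul, Finset.sum_sub_distrib, Finset.sum_ite_eq',
      Finset.mem_univ, if_true, Finset.sum_const, Finset.card_univ, Fintype.card_fin,
      nsmul_eq_mul]
    field_simp
    simp
  have hJv : J *ᵥ (fun _ => (1:ℝ)) = 0 := by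
    ext i
    simp [Matrix.mulVec, dotProduct, hrow i]
  have hJO : J * vecMulVec (1 : Fin n → ℝ) (1 : Fin n → ℝ) = 0 := by
    ext i j
    simp only [Matrix.mul_apply, vecMulVec_apply, Pi.one_apply, mul_one, Matrix.zero_apply]
    have := congrFun hJv i
    simpa [Matrix.mulVec, dotProduct] using this
  have hJJ : J * J = J := by
    conv_lhs => rw [show J * J = J * (1 - ((n : ℝ)⁻¹) • vecMulVec (1 : Fin n → ℝ) (1 : Fin n → ℝ)) from by rw [← hJ]]
    rw [Matrix.mul_sub, Matrix.mul_one, Matrix.mul_smul, hJO, smul_zero, sub_zero]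
  -- the special noise value
  set w₀ : ι → ℝ := fun p => 1 - c p.1.1 p.1.2 with hw₀def
  have hD0 : noisyEDM n c w₀ = vecMulVec (1 : Fin n → ℝ) (1 : Fin n → ℝ) - 1 := by
    ext i j
    simp only [noisyEDM, Matrix.sub_apply, vecMulVec_apply, Pi.one_apply, one_mul]
    split_ifs with h h'
    · rw [Matrix.one_apply_ne (ne_of_lt h), hw₀def]; ring
    · rw [Matrix.one_apply_ne (ne_of_gt h'), hw₀def]; ring
    · have : i = j := le_antisymm (not_lt.mp h') (not_lt.mp h)
      rw [this, Matrix.one_apply_eq]; ring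
  have hA0 : (-(1/2) : ℝ) • (J * noisyEDM n c w₀ * J) = (1/2 : ℝ) • J := by
    rw [hD0, Matrix.mul_sub, Matrix.mul_one, hJO, zero_sub, Matrix.neg_mul, hJJ]
    module
  -- determinant of the submatrix of (1/2) • J
  have hJsub : J.submatrix emb emb = (1 : Matrix (Fin (n-1)) (Fin (n-1)) ℝ)
      - ((n : ℝ)⁻¹) • vecMulVec (1 : Fin (n-1) → ℝ) (1 : Fin (n-1) → ℝ) := by
    ext i j
    simp only [hJ, Matrix.submatrix_apply, Matrix.sub_apply, Matrix.smul_apply,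
      Matrix.one_apply, vecMulVec_apply, Pi.one_apply, mul_one, smul_eq_mul]
    congr 1
    simp [hembdef, Fin.castLE_inj]
  have hdetJsub : (J.submatrix emb emb).det = 1 + (n - 1 : ℕ) * (-(n : ℝ)⁻¹) := by
    rw [hJsub]
    have hcr : (1 : Matrix (Fin (n-1)) (Fin (n-1)) ℝ)
        - ((n : ℝ)⁻¹) • vecMulVec (1 : Fin (n-1) → ℝ) (1 : Fin (n-1) → ℝ)
        = 1 + Matrix.replicateCol Unit (fun _ => -(n : ℝ)⁻¹) * Matrix.replicateRow Unit (1 : Fin (n-1) → ℝ) := by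
      ext i j
      simp [Matrix.mul_apply, Matrix.sub_apply, Matrix.add_apply, Matrix.smul_apply,
        vecMulVec_apply, sub_eq_add_neg]
    rw [hcr, Matrix.det_one_add_replicateCol_mul_replicateRow]
    simp [dotProduct, Finset.sum_const, Fintype.card_fin, nsmul_eq_mul]
  have hdetJsub_ne : (J.submatrix emb emb).det ≠ 0 := by
    rw [hdetJsub]
    have hcast : ((n - 1 : ℕ) : ℝ) = (n : ℝ) - 1 := by
      rw [Nat.cast_sub (by omega)]; simp
    rw [hcast]
    field_simp
    ring_nf
    exact inv_ne_zero hn0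
  have hP : P ≠ 0 := by
    intro h
    have h0 := hdet w₀
    rw [h, map_zero, hA0] at h0
    have hsm : ((1/2 : ℝ) • J).submatrix emb emb = (1/2 : ℝ) • (J.submatrix emb emb) := rfl
    rw [hsm, Matrix.det_smul] at h0
    have hpow : ((1/2 : ℝ) ^ Fintype.card (Fin (n-1))) ≠ 0 := by positivity
    exact hdetJsub_ne ((mul_eq_zero.mp h0.symm).resolve_left hpow)
  -- almost everywhere the minor is nonzero
  have hgood : ∀ᵐ w : ι → ℝ ∂volume, MvPolynomial.eval w P ≠ 0 := by
    rw [ae_iff]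
    simpa using mvpoly_null ι P hP
  filter_upwards [hgood] with w hw
  set A : Matrix (Fin n) (Fin n) ℝ := (-(1/2) : ℝ) • (J * noisyEDM n c w * J) with hAdef
  have hAdet : (A.submatrix emb emb).det ≠ 0 := by
    rw [hAdef, ← hdet w]; exact hw
  have hsub_rank : (A.submatrix emb emb).rank = n - 1 := by
    rw [Matrix.rank_of_isUnit _ ((Matrix.isUnit_iff_isUnit_det _).mpr
      (isUnit_iff_ne_zero.mpr hAdet))]
    simp
  have hge : n - 1 ≤ A.rank := by
    rw [← hsub_rank]; exact rank_submatrix_le' A emb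
  have hAv : A *ᵥ (fun _ => (1:ℝ)) = 0 := by
    rw [hAdef, Matrix.smul_mulVec, ← Matrix.mulVec_mulVec, hJv, Matrix.mulVec_zero,
      smul_zero]
  have hone : (fun _ => (1:ℝ)) ≠ (0 : Fin n → ℝ) := by
    intro h
    simpa using congrFun h ⟨0, by omega⟩
  have hle : A.rank ≤ n - 1 := rank_le_pred_of_mulVec_eq_zero A hone hAv
  exact le_antisymm hle hge
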